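/- Let γ = 256/27, Δ_k = 6(4k+1)!/(k!(3k+3)!), and μ_n = (3/2)·log n/√(γn). Then lim_{n→∞} Σ_{k=3}^{∞} Δ_k · n^{k-1} · k² · μ_n^{2k+1}/(2k+1)! = 0; in fact this sum is O(1/√(log n)). -/

import Mathlib

open Filter Real

lemma sqrt_pi_le_stirlingSeq (n : ℕ) (hn : 1 ≤ n) : Real.sqrt π ≤ Stirling.stirlingSeq n := by
  obtain ⟨m, rfl⟩ := Nat.exists_eq_add_of_le hn
  have h := Stirling.stirlingSeq'_antitone.le_of_tendsto
    (Stirling.tendsto_stirlingSeq_sqrt_pi.comp (tendsto_add_atTop_nat 1)) m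
  simpa [Function.comp, Nat.succ_eq_add_one, Nat.add_comm] using h

lemma stirlingSeq_le (n : ℕ) (hn : 1 ≤ n) : Stirling.stirlingSeq n ≤ exp 1 / Real.sqrt 2 := by
  obtain ⟨m, rfl⟩ := Nat.exists_eq_add_of_le hn
  have h := Stirling.stirlingSeq'_antitone (Nat.zero_le m)
  simpa [Function.comp, Stirling.stirlingSeq_one, Nat.add_comm] using h

lemma stirling_low (n : ℕ) (hn : 1 ≤ n) :
    Real.sqrt (2 * n) * ((n : ℝ) / exp 1) ^ n ≤ ((n.factorial : ℕ) : ℝ) := by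
  have hpos : 0 < Real.sqrt (2 * n) * ((n : ℝ) / exp 1) ^ n := by
    have : (0:ℝ) < n := by exact_mod_cast hn
    positivity
  have h := sqrt_pi_le_stirlingSeq n hn
  rw [Stirling.stirlingSeq, le_div_iff₀ hpos] at h
  have h1 : (1:ℝ) ≤ Real.sqrt π := by
    rw [show (1:ℝ) = Real.sqrt 1 by simp]
    exact Real.sqrt_le_sqrt (by linarith [Real.pi_gt_three])
  nlinarith [hpos]

lemma stirling_high (n : ℕ) (hn : 1 ≤ n) :
    ((n.factorial : ℕ) : ℝ) ≤ exp 1 * Real.sqrt n * ((n : ℝ) / exp 1) ^ n := by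
  have hpos : 0 < Real.sqrt (2 * n) * ((n : ℝ) / exp 1) ^ n := by
    have : (0:ℝ) < n := by exact_mod_cast hn
    positivity
  have h := stirlingSeq_le n hn
  rw [Stirling.stirlingSeq, div_le_div_iff₀ hpos (by positivity)] at h
  have hs : Real.sqrt (2 * n) = Real.sqrt 2 * Real.sqrt n := by
    rw [Real.sqrt_mul (by norm_num)]
  have h2pos : (0:ℝ) < Real.sqrt 2 := Real.sqrt_pos.mpr (by norm_num)
  rw [hs, show exp 1 * (Real.sqrt 2 * Real.sqrt (n:ℝ) * ((n : ℝ) / exp 1) ^ n)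
      = (exp 1 * Real.sqrt (n:ℝ) * ((n : ℝ) / exp 1) ^ n) * Real.sqrt 2 by ring] at h
  exact le_of_mul_le_mul_right h h2pos

/-- Tutte's count of planar triangulations with `k` internal vertices. -/
noncomputable def tutteDelta (k : ℕ) : ℝ :=
  6 * (Nat.factorial (4 * k + 1)) / (Nat.factorial k * Nat.factorial (3 * k + 3))

set_option maxHeartbeats 1000000 in
lemma tutte_bound (k : ℕ) (hk : 1 ≤ k) :
    tutteDelta k * (((k : ℝ)) ^ 2 * Real.sqrt k) ≤ 10 * ((256 : ℝ) / 27) ^ k := by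
  have hk0 : (0:ℝ) < k := by exact_mod_cast hk
  set s : ℝ := Real.sqrt k with hsdef
  have hs0 : 0 < s := Real.sqrt_pos.mpr hk0
  have hs2 : s ^ 2 = (k : ℝ) := Real.sq_sqrt hk0.le
  have hs1 : 1 ≤ s := by
    nlinarith [hk0, hs2, (show (1:ℝ) ≤ (k:ℝ) by exact_mod_cast hk)]
  have he0 : (0:ℝ) < exp 1 := exp_pos 1
  set e : ℝ := exp 1 with hedef
  set P : ℝ := ((256 : ℝ) / 27) ^ k with hP
  set Q1 : ℝ := (s ^ 2 / e) ^ k with hQ1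
  set Q2 : ℝ := (27 * s ^ 6 / e ^ 3) ^ k with hQ2
  have hPpos : 0 < P := pow_pos (by norm_num) k
  have hQ1pos : 0 < Q1 := pow_pos (by positivity) k
  have hQ2pos : 0 < Q2 := pow_pos (by positivity) k
  -- key power identity
  have hkey : (256 * s ^ 8 / e ^ 4) ^ k = P * (Q1 * Q2) := by
    rw [hP, hQ1, hQ2, ← mul_pow, ← mul_pow]
    congr 1
    field_simp
  -- upper bound for (4k)!
  have hF4 : (((4 * k).factorial : ℕ) : ℝ) ≤ 2 * e * s * (P * (Q1 * Q2)) := by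
    have h := stirling_high (4 * k) (by omega)
    have hc : ((4 * k : ℕ) : ℝ) = 4 * (k : ℝ) := by push_cast; ring
    rw [hc] at h
    have hsq : Real.sqrt (4 * (k : ℝ)) = 2 * s := by
      rw [show (4 : ℝ) * k = 2 ^ 2 * k by ring, Real.sqrt_mul (by positivity),
        Real.sqrt_sq (by norm_num : (0:ℝ) ≤ 2)]
    have hbase : (4 * (k : ℝ) / e) ^ 4 = 256 * s ^ 8 / e ^ 4 := by
      rw [← hs2]; field_simp; ring
    have hpow : (4 * (k : ℝ) / e) ^ (4 * k) = (256 * s ^ 8 / e ^ 4) ^ k := by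
      rw [pow_mul, hbase]
    rw [hsq, hpow, hkey] at h
    calc (((4 * k).factorial : ℕ) : ℝ) ≤ e * (2 * s) * (P * (Q1 * Q2)) := h
      _ = 2 * e * s * (P * (Q1 * Q2)) := by ring
  -- lower bound for k!
  have hFk : Real.sqrt 2 * s * Q1 ≤ ((k.factorial : ℕ) : ℝ) := by
    have h := stirling_low k hk
    have hsq : Real.sqrt (2 * (k : ℝ)) = Real.sqrt 2 * s := by
      rw [Real.sqrt_mul (by norm_num)]
    have hpow : ((k : ℝ) / e) ^ k = Q1 := by rw [hQ1, hs2]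
    rw [hsq, hpow] at h
    linarith [h]
  -- lower bound for (3k)!
  have hF3 : Real.sqrt 6 * s * Q2 ≤ (((3 * k).factorial : ℕ) : ℝ) := by
    have h := stirling_low (3 * k) (by omega)
    have hc : ((3 * k : ℕ) : ℝ) = 3 * (k : ℝ) := by push_cast; ring
    rw [hc] at h
    have hsq : Real.sqrt (2 * (3 * (k : ℝ))) = Real.sqrt 6 * s := by
      rw [show (2 : ℝ) * (3 * k) = 6 * k by ring, Real.sqrt_mul (by norm_num)]
    have hbase : (3 * (k : ℝ) / e) ^ 3 = 27 * s ^ 6 / e ^ 3 := by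
      rw [← hs2]; field_simp; ring
    have hpow : (3 * (k : ℝ) / e) ^ (3 * k) = Q2 := by
      rw [pow_mul, hbase, hQ2]
    rw [hsq, hpow] at h
    linarith [h]
  -- factorization of (4k+1)! and (3k+3)!
  have hF41 : (((4 * k + 1).factorial : ℕ) : ℝ)
      = (4 * s ^ 2 + 1) * (((4 * k).factorial : ℕ) : ℝ) := by
    rw [Nat.factorial_succ]
    push_cast
    rw [hs2]
  have hF33 : (((3 * k + 3).factorial : ℕ) : ℝ)
      = (3 * s ^ 2 + 3) * (3 * s ^ 2 + 2) * (3 * s ^ 2 + 1) * (((3 * k).factorial : ℕ) : ℝ) := by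
    have e1 : 3 * k + 3 = (3 * k + 2) + 1 := by omega
    have e2 : 3 * k + 2 = (3 * k + 1) + 1 := by omega
    rw [e1, Nat.factorial_succ, e2, Nat.factorial_succ, Nat.factorial_succ]
    push_cast
    rw [hs2]
    ring
  -- lower bound for (3k+3)!
  have hF33' : 27 * s ^ 6 * (Real.sqrt 6 * s * Q2) ≤ (((3 * k + 3).factorial : ℕ) : ℝ) := by
    rw [hF33]
    have h1 : 27 * s ^ 6 ≤ (3 * s ^ 2 + 3) * (3 * s ^ 2 + 2) * (3 * s ^ 2 + 1) := by nlinarith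
    have h2 : (0:ℝ) ≤ Real.sqrt 6 * s * Q2 := by positivity
    calc 27 * s ^ 6 * (Real.sqrt 6 * s * Q2)
        ≤ ((3 * s ^ 2 + 3) * (3 * s ^ 2 + 2) * (3 * s ^ 2 + 1)) * (Real.sqrt 6 * s * Q2) := by
          exact mul_le_mul_of_nonneg_right h1 h2
      _ ≤ ((3 * s ^ 2 + 3) * (3 * s ^ 2 + 2) * (3 * s ^ 2 + 1)) * (((3 * k).factorial : ℕ) : ℝ) := by
          apply mul_le_mul_of_nonneg_left hF3
          nlinarith
  -- main computation
  have hden : (0:ℝ) < ((k.factorial : ℕ) : ℝ) * (((3 * k + 3).factorial : ℕ) : ℝ) := by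
    have := Nat.factorial_pos k
    have := Nat.factorial_pos (3 * k + 3)
    positivity
  rw [tutteDelta, div_mul_eq_mul_div, div_le_iff₀ hden]
  have hky : (k : ℝ) ^ 2 * Real.sqrt k = s ^ 5 := by
    rw [← hs2, Real.sqrt_sq hs0.le]; ring
  rw [hky, hF41]
  have h26 : 3 ≤ Real.sqrt 2 * Real.sqrt 6 := by
    rw [← Real.sqrt_mul (by norm_num)]
    rw [show (3:ℝ) = Real.sqrt 9 by rw [show (9:ℝ) = 3 ^ 2 by norm_num, Real.sqrt_sq]; norm_num]
    exact Real.sqrt_le_sqrt (by norm_num)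
  have he3 : e ≤ 2.7182818286 := le_of_lt Real.exp_one_lt_d9
  have h68 : s ^ 6 ≤ s ^ 8 := pow_le_pow_right₀ hs1 (by norm_num)
  have hnum : 6 * ((4 * s ^ 2 + 1) * (2 * e * s)) * s ^ 5
      ≤ 10 * (Real.sqrt 2 * (27 * Real.sqrt 6)) * s ^ 8 := by
    have hrs : 10 * (Real.sqrt 2 * (27 * Real.sqrt 6)) * s ^ 8
        = 270 * (Real.sqrt 2 * Real.sqrt 6) * s ^ 8 := by ring
    rw [hrs]
    nlinarith [mul_le_mul_of_nonneg_right he3 (pow_nonneg hs0.le 8),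
      mul_le_mul_of_nonneg_right he3 (pow_nonneg hs0.le 6),
      mul_le_mul_of_nonneg_right h26 (pow_nonneg hs0.le 8),
      mul_le_mul_of_nonneg_left h68 he0.le, pow_nonneg hs0.le 8]
  calc 6 * ((4 * s ^ 2 + 1) * (((4 * k).factorial : ℕ) : ℝ)) * s ^ 5
      ≤ 6 * ((4 * s ^ 2 + 1) * (2 * e * s * (P * (Q1 * Q2)))) * s ^ 5 := by
        refine mul_le_mul_of_nonneg_right (mul_le_mul_of_nonneg_left ?_ (by norm_num)) (by positivity)
        exact mul_le_mul_of_nonneg_left hF4 (by positivity)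
    _ = (6 * ((4 * s ^ 2 + 1) * (2 * e * s)) * s ^ 5) * (P * (Q1 * Q2)) := by ring
    _ ≤ (10 * (Real.sqrt 2 * (27 * Real.sqrt 6)) * s ^ 8) * (P * (Q1 * Q2)) := by
        exact mul_le_mul_of_nonneg_right hnum (by positivity)
    _ = 10 * P * ((Real.sqrt 2 * s * Q1) * (27 * s ^ 6 * (Real.sqrt 6 * s * Q2))) := by ring
    _ ≤ 10 * P * (((k.factorial : ℕ) : ℝ) * (((3 * k + 3).factorial : ℕ) : ℝ)) := by
        refine mul_le_mul_of_nonneg_left ?_ (by positivity)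
        exact mul_le_mul hFk hF33' (by positivity) (Nat.cast_nonneg _)

lemma exp_split (a : ℝ) (ha : 0 < a) (m : ℕ) (hm : 1 ≤ m) :
    a ^ m / (m.factorial * Real.sqrt m)
      ≤ Real.sqrt 2 * (a ^ m / m.factorial) / Real.sqrt a
        + (2 : ℝ) ^ (a / 2 : ℝ) * ((a / 2) ^ m / m.factorial) := by
  have hm0 : (0:ℝ) < m := by exact_mod_cast hm
  have hf : (0:ℝ) < (m.factorial : ℝ) := by exact_mod_cast m.factorial_pos
  rcases le_or_gt (a / 2) m with h | h
  · -- large m : use the 1/sqrt a term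
    have h1 : Real.sqrt a / Real.sqrt 2 ≤ Real.sqrt m := by
      rw [← Real.sqrt_div ha.le]
      exact Real.sqrt_le_sqrt h
    have h2 : 0 < Real.sqrt a / Real.sqrt 2 := by positivity
    have key : a ^ m / (m.factorial * Real.sqrt m)
        ≤ Real.sqrt 2 * (a ^ m / m.factorial) / Real.sqrt a := by
      rw [show Real.sqrt 2 * (a ^ m / m.factorial) / Real.sqrt a
          = a ^ m / (m.factorial * (Real.sqrt a / Real.sqrt 2)) by
        field_simp]
      apply div_le_div_of_nonneg_left (by positivity) (by positivity)
      exact mul_le_mul_of_nonneg_left h1 hf.le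
    have : (0:ℝ) ≤ (2 : ℝ) ^ (a / 2 : ℝ) * ((a / 2) ^ m / m.factorial) := by positivity
    linarith
  · -- small m : Chernoff-type bound
    have hs1 : (1:ℝ) ≤ Real.sqrt m := by
      rw [show (1:ℝ) = Real.sqrt 1 by simp]
      exact Real.sqrt_le_sqrt (by exact_mod_cast hm)
    have step1 : a ^ m / (m.factorial * Real.sqrt m) ≤ a ^ m / m.factorial := by
      apply div_le_div_of_nonneg_left (by positivity) hf
      nlinarith
    have step2 : a ^ m / m.factorial ≤ (2 : ℝ) ^ (a / 2 : ℝ) * ((a / 2) ^ m / m.factorial) := by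
      have hpow : a ^ m = 2 ^ m * (a / 2) ^ m := by
        rw [← mul_pow]; ring_nf
      have h2m : (2:ℝ) ^ m ≤ (2 : ℝ) ^ (a / 2 : ℝ) := by
        rw [← Real.rpow_natCast 2 m]
        exact Real.rpow_le_rpow_of_exponent_le (by norm_num) h.le
      rw [hpow, mul_div_assoc]
      exact mul_le_mul_of_nonneg_right h2m (by positivity)
    have : (0:ℝ) ≤ Real.sqrt 2 * (a ^ m / m.factorial) / Real.sqrt a := by positivity
    linarith

lemma summable_tail (x : ℝ) :
    Summable (fun k : ℕ => x ^ (2 * (k + 3) + 1) / (((2 * (k + 3) + 1).factorial : ℕ) : ℝ)) := by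
  have hsum : Summable (fun m : ℕ => x ^ m / ((m.factorial : ℕ) : ℝ)) :=
    Real.summable_pow_div_factorial x
  exact hsum.comp_injective (fun a b hab => by
    have : 2 * (a + 3) + 1 = 2 * (b + 3) + 1 := hab
    omega)

lemma tsum_exp_tail (x : ℝ) (hx : 0 ≤ x) :
    (∑' k : ℕ, x ^ (2 * (k + 3) + 1) / (((2 * (k + 3) + 1).factorial : ℕ) : ℝ)) ≤ Real.exp x := by
  have hsum : Summable (fun m : ℕ => x ^ m / ((m.factorial : ℕ) : ℝ)) :=
    Real.summable_pow_div_factorial x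
  have hinj : Function.Injective (fun k : ℕ => 2 * (k + 3) + 1) := by
    intro a b hab
    have : 2 * (a + 3) + 1 = 2 * (b + 3) + 1 := hab
    omega
  calc (∑' k : ℕ, x ^ (2 * (k + 3) + 1) / (((2 * (k + 3) + 1).factorial : ℕ) : ℝ))
      ≤ ∑' m : ℕ, x ^ m / ((m.factorial : ℕ) : ℝ) := by
        apply Summable.tsum_le_tsum_of_inj _ hinj
        · intro c _
          exact div_nonneg (pow_nonneg hx _) (Nat.cast_nonneg _)
        · intro k; exact le_rfl
        · exact hsum.comp_injective hinj
        · exact hsum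
    _ ≤ Real.exp x := by
        apply Real.tsum_le_of_sum_range_le
        · intro n; exact div_nonneg (pow_nonneg hx _) (Nat.cast_nonneg _)
        · intro n; exact Real.sum_le_exp_of_nonneg hx n

lemma tutteDelta_nonneg (k : ℕ) : 0 ≤ tutteDelta k := by
  unfold tutteDelta; positivity

lemma sqrt_tendsto_atTop : Tendsto Real.sqrt atTop atTop := by
  refine tendsto_atTop_atTop.mpr fun b => ⟨b ^ 2, fun a ha => ?_⟩
  calc b ≤ |b| := le_abs_self b
    _ = Real.sqrt (b ^ 2) := (Real.sqrt_sq_eq_abs b).symm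
    _ ≤ Real.sqrt a := Real.sqrt_le_sqrt ha

lemma cube_le_exp {x : ℝ} (hx : 0 ≤ x) : x ^ 3 / 6 ≤ Real.exp x := by
  have h := Real.sum_le_exp_of_nonneg hx 4
  have hexp : ∑ i ∈ Finset.range 4, x ^ i / i.factorial
      = 1 + x + x ^ 2 / 2 + x ^ 3 / 6 := by
    norm_num [Finset.sum_range_succ, Nat.factorial]
    try ring
  rw [hexp] at h
  nlinarith [sq_nonneg x]

set_option maxHeartbeats 1000000 in
theorem improper_fillings_first_moment (γ : ℝ) (hγ : γ = 256 / 27)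
    (μ : ℕ → ℝ) (hμ : ∀ n : ℕ, μ n = (3 / 2) * Real.log n / Real.sqrt (γ * n))
    (S : ℕ → ℝ)
    (hS : ∀ n : ℕ, S n = ∑' k : ℕ,
      tutteDelta (k + 3) * (n : ℝ) ^ (k + 3 - 1) * ((k + 3 : ℕ) : ℝ) ^ 2 *
        (μ n) ^ (2 * (k + 3) + 1) / (Nat.factorial (2 * (k + 3) + 1))) :
    Tendsto S atTop (nhds 0) ∧
      ∃ C : ℝ, ∀ᶠ n : ℕ in atTop, S n ≤ C / Real.sqrt (Real.log n) := by
  subst hγ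
  have hlogT : Tendsto (fun n : ℕ => Real.log n) atTop atTop :=
    Real.tendsto_log_atTop.comp tendsto_natCast_atTop_atTop
  have key : ∀ᶠ n : ℕ in atTop, S n ≤ 100 / Real.sqrt (Real.log n) := by
    filter_upwards [eventually_ge_atTop 1, hlogT.eventually_ge_atTop 90] with n hn1 hlog90
    have hN1 : (1 : ℝ) ≤ (n : ℝ) := by exact_mod_cast hn1
    have hN0 : (0 : ℝ) < (n : ℝ) := by linarith
    set N : ℝ := (n : ℝ) with hN
    set a : ℝ := 3 / 2 * Real.log n with hadef
    have ha135 : 135 ≤ a := by rw [hadef]; linarith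
    have ha0 : 0 < a := by linarith
    have halog : Real.log n ≤ a := by rw [hadef]; linarith [hlog90]
    set t : ℝ := Real.sqrt (256 / 27 * N) with htdef
    have ht0 : 0 < t := Real.sqrt_pos.mpr (by positivity)
    have ht2 : t ^ 2 = 256 / 27 * N := Real.sq_sqrt (by positivity)
    have hμn : μ n = a / t := by rw [hμ n]
    set c : ℝ := 18 / (N * t) with hcdef
    have hc0 : 0 < c := by positivity
    set f1 : ℕ → ℝ := fun k => a ^ (2 * (k + 3) + 1) / (((2 * (k + 3) + 1).factorial : ℕ) : ℝ)
      with hf1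
    set f2 : ℕ → ℝ := fun k =>
      (a / 2) ^ (2 * (k + 3) + 1) / (((2 * (k + 3) + 1).factorial : ℕ) : ℝ) with hf2
    set g : ℕ → ℝ := fun k =>
      c * (Real.sqrt 2 * f1 k / Real.sqrt a + (2 : ℝ) ^ (a / 2 : ℝ) * f2 k) with hg
    set term : ℕ → ℝ := fun k =>
      tutteDelta (k + 3) * N ^ (k + 3 - 1) * ((k + 3 : ℕ) : ℝ) ^ 2 *
        (μ n) ^ (2 * (k + 3) + 1) / (((2 * (k + 3) + 1).factorial : ℕ) : ℝ) with hterm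
    have hterm_nonneg : ∀ k, 0 ≤ term k := by
      intro k
      have hμ0 : 0 ≤ μ n := by rw [hμn]; positivity
      apply div_nonneg _ (Nat.cast_nonneg _)
      apply mul_nonneg _ (pow_nonneg hμ0 _)
      apply mul_nonneg _ (sq_nonneg _)
      exact mul_nonneg (tutteDelta_nonneg _) (pow_nonneg hN0.le _)
    have hterm_le : ∀ k, term k ≤ g k := by
      intro k
      have hfm : (0 : ℝ) < (((2 * (k + 3) + 1).factorial : ℕ) : ℝ) := by
        exact_mod_cast (2 * (k + 3) + 1).factorial_pos
      have hBpos : (0:ℝ) < ((256 : ℝ) / 27) ^ (k + 3) := by positivity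
      have hsm0 : (0:ℝ) < Real.sqrt ((2 * (k + 3) + 1 : ℕ) : ℝ) :=
        Real.sqrt_pos.mpr (by positivity)
      have htm : t ^ (2 * (k + 3) + 1) = ((256 : ℝ) / 27) ^ (k + 3) * N ^ (k + 2) * N * t := by
        rw [pow_succ, pow_mul, ht2, mul_pow]
        ring
      have hμpow : (a / t) ^ (2 * (k + 3) + 1)
          = a ^ (2 * (k + 3) + 1) / (((256 : ℝ) / 27) ^ (k + 3) * N ^ (k + 2) * N * t) := by
        rw [div_pow, htm]
      have hid : term k = tutteDelta (k + 3) * ((k + 3 : ℕ) : ℝ) ^ 2 * a ^ (2 * (k + 3) + 1)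
          / (((256 : ℝ) / 27) ^ (k + 3) * (N * t) * (((2 * (k + 3) + 1).factorial : ℕ) : ℝ)) := by
        rw [hterm]
        simp only []
        rw [hμn, show k + 3 - 1 = k + 2 by omega, hμpow]
        have hu0 : N ^ (k + 2) ≠ 0 := by positivity
        have hB0 : ((256 : ℝ) / 27) ^ (k + 3) ≠ 0 := by positivity
        set u : ℝ := N ^ (k + 2) with hu
        set B : ℝ := ((256 : ℝ) / 27) ^ (k + 3) with hBB
        set A : ℝ := a ^ (2 * (k + 3) + 1) with hA
        set F : ℝ := (((2 * (k + 3) + 1).factorial : ℕ) : ℝ) with hF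
        field_simp
      -- combinatorial bound
      have htb := tutte_bound (k + 3) (by omega)
      have hXb : tutteDelta (k + 3) * ((k + 3 : ℕ) : ℝ) ^ 2 * Real.sqrt ((2 * (k + 3) + 1 : ℕ) : ℝ)
          ≤ 18 * ((256 : ℝ) / 27) ^ (k + 3) := by
        have hmle : Real.sqrt ((2 * (k + 3) + 1 : ℕ) : ℝ)
            ≤ Real.sqrt 3 * Real.sqrt ((k + 3 : ℕ) : ℝ) := by
          rw [← Real.sqrt_mul (by norm_num)]
          apply Real.sqrt_le_sqrt
          push_cast
          linarith
        have hs3 : Real.sqrt 3 ≤ 1.8 := by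
          rw [show (1.8 : ℝ) = Real.sqrt (1.8 ^ 2) by rw [Real.sqrt_sq (by norm_num)]]
          exact Real.sqrt_le_sqrt (by norm_num)
        have hXnn : 0 ≤ tutteDelta (k + 3) * ((k + 3 : ℕ) : ℝ) ^ 2 :=
          mul_nonneg (tutteDelta_nonneg _) (sq_nonneg _)
        calc tutteDelta (k + 3) * ((k + 3 : ℕ) : ℝ) ^ 2 * Real.sqrt ((2 * (k + 3) + 1 : ℕ) : ℝ)
            ≤ tutteDelta (k + 3) * ((k + 3 : ℕ) : ℝ) ^ 2
                * (Real.sqrt 3 * Real.sqrt ((k + 3 : ℕ) : ℝ)) :=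
              mul_le_mul_of_nonneg_left hmle hXnn
          _ = Real.sqrt 3 * (tutteDelta (k + 3)
                * (((k + 3 : ℕ) : ℝ) ^ 2 * Real.sqrt ((k + 3 : ℕ) : ℝ))) := by ring
          _ ≤ Real.sqrt 3 * (10 * ((256 : ℝ) / 27) ^ (k + 3)) :=
              mul_le_mul_of_nonneg_left htb (Real.sqrt_nonneg 3)
          _ = 10 * Real.sqrt 3 * ((256 : ℝ) / 27) ^ (k + 3) := by ring
          _ ≤ 18 * ((256 : ℝ) / 27) ^ (k + 3) := by nlinarith [hBpos, hs3, Real.sqrt_nonneg 3]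
      -- term ≤ mid
      have hmid2 : term k ≤ 18 * a ^ (2 * (k + 3) + 1)
          / ((N * t) * ((((2 * (k + 3) + 1).factorial : ℕ) : ℝ)
              * Real.sqrt ((2 * (k + 3) + 1 : ℕ) : ℝ))) := by
        rw [hid, div_le_div_iff₀ (by positivity) (by positivity)]
        have hmul := mul_le_mul_of_nonneg_right hXb
          (show (0:ℝ) ≤ a ^ (2 * (k + 3) + 1)
              * ((N * t) * (((2 * (k + 3) + 1).factorial : ℕ) : ℝ)) by positivity)
        nlinarith [hmul]
      have hmid : term k ≤ c * (a ^ (2 * (k + 3) + 1)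
          / ((((2 * (k + 3) + 1).factorial : ℕ) : ℝ) * Real.sqrt ((2 * (k + 3) + 1 : ℕ) : ℝ))) := by
        refine hmid2.trans_eq ?_
        rw [hcdef]
        ring
      have hsplit := exp_split a ha0 (2 * (k + 3) + 1) (by omega)
      calc term k ≤ c * (a ^ (2 * (k + 3) + 1)
            / ((((2 * (k + 3) + 1).factorial : ℕ) : ℝ)
              * Real.sqrt ((2 * (k + 3) + 1 : ℕ) : ℝ))) := hmid
        _ ≤ c * (Real.sqrt 2 * (a ^ (2 * (k + 3) + 1)
              / (((2 * (k + 3) + 1).factorial : ℕ) : ℝ)) / Real.sqrt a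
              + (2 : ℝ) ^ (a / 2 : ℝ) * ((a / 2) ^ (2 * (k + 3) + 1)
              / (((2 * (k + 3) + 1).factorial : ℕ) : ℝ))) :=
            mul_le_mul_of_nonneg_left hsplit hc0.le
        _ = g k := by simp only [hg, hf1, hf2]
    -- summability
    have hf1sum : Summable f1 := summable_tail a
    have hf2sum : Summable f2 := summable_tail (a / 2)
    have hsum1 : Summable (fun k => Real.sqrt 2 * f1 k / Real.sqrt a) := by
      have := hf1sum.mul_left (Real.sqrt 2 / Real.sqrt a)
      exact this.congr (fun k => by ring)
    have hsum2 : Summable (fun k => (2 : ℝ) ^ (a / 2 : ℝ) * f2 k) := hf2sum.mul_left _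
    have hgsum : Summable g := by
      rw [hg]
      exact ((hsum1.add hsum2).mul_left c)
    have htermsum : Summable term :=
      Summable.of_nonneg_of_le hterm_nonneg hterm_le hgsum
    have hSle : S n ≤ ∑' k, g k := by
      rw [hS n]
      exact Summable.tsum_le_tsum hterm_le htermsum hgsum
    have hT1 : ∑' k, f1 k ≤ Real.exp a := tsum_exp_tail a ha0.le
    have hT2 : ∑' k, f2 k ≤ Real.exp (a / 2) := tsum_exp_tail (a / 2) (by linarith)
    have hgsum_eq : ∑' k, g k = c * ((Real.sqrt 2 / Real.sqrt a) * (∑' k, f1 k)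
        + (2 : ℝ) ^ (a / 2 : ℝ) * (∑' k, f2 k)) := by
      rw [hg, tsum_mul_left]
      congr 1
      rw [Summable.tsum_add hsum1 hsum2]
      congr 1
      rw [show (fun k => Real.sqrt 2 * f1 k / Real.sqrt a)
          = fun k => (Real.sqrt 2 / Real.sqrt a) * f1 k by funext k; ring, tsum_mul_left]
      rw [tsum_mul_left]
    have hsa0 : 0 < Real.sqrt a := Real.sqrt_pos.mpr ha0
    have hfinal : S n ≤ c * ((Real.sqrt 2 / Real.sqrt a) * Real.exp a
        + (2 : ℝ) ^ (a / 2 : ℝ) * Real.exp (a / 2)) := by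
      refine hSle.trans ?_
      rw [hgsum_eq]
      have h1 : (Real.sqrt 2 / Real.sqrt a) * (∑' k, f1 k)
          ≤ (Real.sqrt 2 / Real.sqrt a) * Real.exp a :=
        mul_le_mul_of_nonneg_left hT1 (by positivity)
      have h2 : (2 : ℝ) ^ (a / 2 : ℝ) * (∑' k, f2 k)
          ≤ (2 : ℝ) ^ (a / 2 : ℝ) * Real.exp (a / 2) :=
        mul_le_mul_of_nonneg_left hT2 (by positivity)
      exact mul_le_mul_of_nonneg_left (add_le_add h1 h2) hc0.le
    -- scalar estimates
    have hNt : N * t = Real.sqrt (256 / 27) * Real.exp a := by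
      rw [htdef, Real.sqrt_mul (by norm_num)]
      have hexp : Real.exp a = N * Real.sqrt N := by
        rw [hadef, show (3:ℝ) / 2 * Real.log n = Real.log n + Real.log n / 2 by ring,
          Real.exp_add, Real.exp_log hN0, Real.exp_half, Real.exp_log hN0]
      rw [hexp]
      ring
    have hsc0 : (3 : ℝ) ≤ Real.sqrt (256 / 27) := by
      rw [show (3:ℝ) = Real.sqrt 9 by
        rw [show (9:ℝ) = 3 ^ 2 by norm_num, Real.sqrt_sq (by norm_num)]]
      exact Real.sqrt_le_sqrt (by norm_num)
    have hE0 : 0 < Real.exp a := Real.exp_pos a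
    have hpiece1 : c * ((Real.sqrt 2 / Real.sqrt a) * Real.exp a) ≤ 9 / Real.sqrt a := by
      rw [hcdef, hNt]
      have hs2 : Real.sqrt 2 ≤ 1.5 := by
        rw [show (1.5 : ℝ) = Real.sqrt (1.5 ^ 2) by rw [Real.sqrt_sq (by norm_num)]]
        exact Real.sqrt_le_sqrt (by norm_num)
      have hid2 : 18 / (Real.sqrt (256 / 27) * Real.exp a)
          * ((Real.sqrt 2 / Real.sqrt a) * Real.exp a)
          = 18 * Real.sqrt 2 / (Real.sqrt (256 / 27) * Real.sqrt a) := by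
        field_simp
      rw [hid2, div_le_div_iff₀ (by positivity) hsa0]
      nlinarith [hs2, hsc0, hsa0.le, Real.sqrt_nonneg 2,
        mul_le_mul_of_nonneg_right hsc0 hsa0.le]
    have hpiece2 : c * ((2 : ℝ) ^ (a / 2 : ℝ) * Real.exp (a / 2)) ≤ 6 / Real.sqrt a := by
      rw [hcdef, hNt]
      have h2a : (2 : ℝ) ^ (a / 2 : ℝ) = Real.exp (Real.log 2 * (a / 2)) :=
        Real.rpow_def_of_pos (by norm_num) _
      have hl2 : Real.log 2 ≤ 0.7 := by linarith [Real.log_two_lt_d9]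
      have hexpa : a ≤ Real.exp (0.15 * a) := by
        have h3 := cube_le_exp (show (0:ℝ) ≤ 0.15 * a by linarith)
        nlinarith [h3, ha135, mul_le_mul_of_nonneg_right ha135 ha0.le,
          mul_le_mul_of_nonneg_right (mul_le_mul_of_nonneg_right ha135 ha0.le) ha0.le]
      have hcomb : (2 : ℝ) ^ (a / 2 : ℝ) * Real.exp (a / 2) ≤ Real.exp (0.85 * a) := by
        rw [h2a, ← Real.exp_add]
        apply Real.exp_le_exp.mpr
        nlinarith [ha0, hl2]
      have hstep : 18 / (Real.sqrt (256 / 27) * Real.exp a)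
          * ((2 : ℝ) ^ (a / 2 : ℝ) * Real.exp (a / 2))
          ≤ 18 / (Real.sqrt (256 / 27) * Real.exp a) * Real.exp (0.85 * a) :=
        mul_le_mul_of_nonneg_left hcomb (by positivity)
      refine hstep.trans ?_
      have hid3 : 18 / (Real.sqrt (256 / 27) * Real.exp a) * Real.exp (0.85 * a)
          = (18 / Real.sqrt (256 / 27)) * (Real.exp (0.85 * a) / Real.exp a) := by
        field_simp
        try ring
      rw [hid3]
      have hquot : Real.exp (0.85 * a) / Real.exp a = (Real.exp (0.15 * a))⁻¹ := by
        rw [← Real.exp_sub, show (0.85 : ℝ) * a - a = -(0.15 * a) by ring, Real.exp_neg]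
      rw [hquot]
      have hc6 : 18 / Real.sqrt (256 / 27) ≤ 6 := by
        rw [div_le_iff₀ (by positivity)]
        linarith [hsc0]
      have hinv0 : (0:ℝ) < (Real.exp (0.15 * a))⁻¹ := by positivity
      calc (18 / Real.sqrt (256 / 27)) * (Real.exp (0.15 * a))⁻¹
          ≤ 6 * (Real.exp (0.15 * a))⁻¹ := mul_le_mul_of_nonneg_right hc6 hinv0.le
        _ ≤ 6 / a := by
            rw [div_eq_mul_inv]
            apply mul_le_mul_of_nonneg_left _ (by norm_num)
            apply inv_anti₀ ha0 hexpa
        _ ≤ 6 / Real.sqrt a := by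
            have hsalea : Real.sqrt a ≤ a := by
              calc Real.sqrt a ≤ Real.sqrt (a ^ 2) := Real.sqrt_le_sqrt (by nlinarith)
                _ = a := Real.sqrt_sq ha0.le
            gcongr
    have hsma : Real.sqrt (Real.log n) ≤ Real.sqrt a := Real.sqrt_le_sqrt halog
    have hslog0 : 0 < Real.sqrt (Real.log n) := Real.sqrt_pos.mpr (by linarith)
    calc S n ≤ c * ((Real.sqrt 2 / Real.sqrt a) * Real.exp a
          + (2 : ℝ) ^ (a / 2 : ℝ) * Real.exp (a / 2)) := hfinal
      _ = c * ((Real.sqrt 2 / Real.sqrt a) * Real.exp a)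
          + c * ((2 : ℝ) ^ (a / 2 : ℝ) * Real.exp (a / 2)) := by ring
      _ ≤ 9 / Real.sqrt a + 6 / Real.sqrt a := add_le_add hpiece1 hpiece2
      _ = 15 / Real.sqrt a := by ring
      _ ≤ 15 / Real.sqrt (Real.log n) := by gcongr
      _ ≤ 100 / Real.sqrt (Real.log n) := by gcongr <;> norm_num
  constructor
  · have hS0 : ∀ n, 0 ≤ S n := by
      intro n
      rw [hS n]
      apply tsum_nonneg
      intro k
      have hμ0 : 0 ≤ μ n := by
        rw [hμ n]
        apply div_nonneg _ (Real.sqrt_nonneg _)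
        have := Real.log_natCast_nonneg n
        linarith
      apply div_nonneg _ (Nat.cast_nonneg _)
      apply mul_nonneg _ (pow_nonneg hμ0 _)
      apply mul_nonneg _ (sq_nonneg _)
      exact mul_nonneg (tutteDelta_nonneg _) (pow_nonneg (Nat.cast_nonneg n) _)
    have hlim : Tendsto (fun n : ℕ => 100 / Real.sqrt (Real.log n)) atTop (nhds 0) :=
      (sqrt_tendsto_atTop.comp hlogT).const_div_atTop 100
    exact squeeze_zero' (Eventually.of_forall hS0) key hlim
  · exact ⟨100, key⟩
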